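/- Let p be a prime, k ≥ 1, ℓ ≥ 1, and let δ : Fin ℓ → ℕ be monotone with 1 ≤ δ j ≤ k for all j. Let Λ be the set of families (λ_j)_{j : Fin ℓ} of vectors λ_j : Fin k → ZMod p such that for each j: λ_j ≠ 0 and λ_j i = 0 whenever δ j ≤ (i : ℕ) + 1 is false, i.e. λ_j is supported in the first δ j coordinates. Then the 𝔽_p-linear map Φ : (Λ → H) → (((Fin k → ℕ) × (Π j : Fin ℓ, Fin (p^{δ j} − 1))) →₀ ZMod p), defined by Φ(x)(I, ν) = Σ_{(λ_j) ∈ Λ} (D_{∏_j ℓ_{λ_j}^{(ν j : ℕ)+1}} (x (λ_j))) I, is surjective. -/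

import Mathlib

/-- The linear form `λ₁ t₁ + ⋯ + λ_k t_k ∈ 𝔽_p[t₁,…,t_k]` attached to
`λ : Fin k → ZMod p`. -/
noncomputable def linForm (p k : ℕ) (lam : Fin k → ZMod p) :
    MvPolynomial (Fin k) (ZMod p) :=
  ∑ i : Fin k, lam i • MvPolynomial.X i

/-- The contraction operator `D_g` on the free `𝔽_p`-module `H = ((Fin k → ℕ) →₀ 𝔽_p)`,
dual to multiplication by `g`: `(D_g x) I = ∑_{J ∈ g.support} (coeff J g) * x (I + J)`. -/
noncomputable def contract (p k : ℕ) (g : MvPolynomial (Fin k) (ZMod p))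
    (x : (Fin k → ℕ) →₀ ZMod p) : (Fin k → ℕ) →₀ ZMod p :=
  Finsupp.onFinset (g.support.biUnion fun J => x.support.image fun K => K - J)
    (fun I => ∑ J ∈ g.support, MvPolynomial.coeff J g * x (I + J))
    (fun I hI => by
      by_contra hmem
      apply hI
      apply Finset.sum_eq_zero
      intro J hJ
      rcases eq_or_ne (x (I + J)) 0 with h | h
      · rw [h, mul_zero]
      · exact absurd
          (Finset.mem_biUnion.mpr ⟨J, hJ, Finset.mem_image.mpr
            ⟨I + J, Finsupp.mem_support_iff.mpr h, by funext t; simp⟩⟩)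
          hmem)

open MvPolynomial Finsupp

variable {p k : ℕ}

lemma contract_apply (g : MvPolynomial (Fin k) (ZMod p)) (x : (Fin k → ℕ) →₀ ZMod p)
    (I : Fin k → ℕ) :
    contract p k g x I = ∑ J ∈ g.support, MvPolynomial.coeff J g * x (I + J) :=
  rfl

lemma contract_apply_subset {g : MvPolynomial (Fin k) (ZMod p)} {s : Finset (Fin k →₀ ℕ)}
    (hs : g.support ⊆ s) (x : (Fin k → ℕ) →₀ ZMod p) (I : Fin k → ℕ) :
    contract p k g x I = ∑ J ∈ s, MvPolynomial.coeff J g * x (I + J) := by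
  rw [contract_apply]
  exact Finset.sum_subset hs (fun J _ hJ => by
    rw [MvPolynomial.notMem_support_iff.mp hJ, zero_mul])

lemma contract_add_left (g h : MvPolynomial (Fin k) (ZMod p)) (x : (Fin k → ℕ) →₀ ZMod p) :
    contract p k (g + h) x = contract p k g x + contract p k h x := by
  ext I
  rw [Finsupp.add_apply,
    contract_apply_subset (s := g.support ∪ h.support) (MvPolynomial.support_add),
    contract_apply_subset (s := g.support ∪ h.support) Finset.subset_union_left x I,
    contract_apply_subset (s := g.support ∪ h.support) Finset.subset_union_right x I,
    ← Finset.sum_add_distrib]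
  exact Finset.sum_congr rfl fun J _ => by rw [MvPolynomial.coeff_add, add_mul]

lemma contract_zero_left (x : (Fin k → ℕ) →₀ ZMod p) : contract p k 0 x = 0 := by
  ext I; simp [contract_apply]

lemma contract_monomial (J : Fin k →₀ ℕ) (c : ZMod p) (x : (Fin k → ℕ) →₀ ZMod p)
    (I : Fin k → ℕ) :
    contract p k (MvPolynomial.monomial J c) x I = c * x (I + J) := by
  rw [contract_apply_subset (s := {J}) MvPolynomial.support_monomial_subset]
  simp [MvPolynomial.coeff_monomial]

lemma contract_add_right (g : MvPolynomial (Fin k) (ZMod p)) (x y : (Fin k → ℕ) →₀ ZMod p) :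
    contract p k g (x + y) = contract p k g x + contract p k g y := by
  ext I
  rw [Finsupp.add_apply, contract_apply, contract_apply, contract_apply,
    ← Finset.sum_add_distrib]
  exact Finset.sum_congr rfl fun J _ => by rw [Finsupp.add_apply, mul_add]

lemma contract_smul_right (g : MvPolynomial (Fin k) (ZMod p)) (c : ZMod p)
    (x : (Fin k → ℕ) →₀ ZMod p) :
    contract p k g (c • x) = c • contract p k g x := by
  ext I
  rw [Finsupp.smul_apply, contract_apply, contract_apply, smul_eq_mul, Finset.mul_sum]
  exact Finset.sum_congr rfl fun J _ => by
    rw [Finsupp.smul_apply, smul_eq_mul]; ring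

lemma contract_mul (g h : MvPolynomial (Fin k) (ZMod p)) (x : (Fin k → ℕ) →₀ ZMod p) :
    contract p k (g * h) x = contract p k g (contract p k h x) := by
  induction g using MvPolynomial.induction_on' with
  | add g₁ g₂ hg₁ hg₂ =>
    rw [add_mul, contract_add_left, contract_add_left, hg₁, hg₂]
  | monomial a c =>
    induction h using MvPolynomial.induction_on' with
    | add h₁ h₂ hh₁ hh₂ =>
      rw [mul_add, contract_add_left, hh₁, hh₂, contract_add_left, contract_add_right]
    | monomial b d =>
      ext I
      rw [MvPolynomial.monomial_mul, contract_monomial, contract_monomial, contract_monomial,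
        mul_assoc, Finsupp.coe_add, ← add_assoc]

lemma contract_C (a : ZMod p) (x : (Fin k → ℕ) →₀ ZMod p) :
    contract p k (MvPolynomial.C a) x = a • x := by
  ext I
  rw [← MvPolynomial.monomial_zero', contract_monomial, Finsupp.smul_apply, smul_eq_mul]
  simp

lemma contract_one (x : (Fin k → ℕ) →₀ ZMod p) : contract p k 1 x = x := by
  rw [← MvPolynomial.C_1, contract_C, one_smul]

lemma contract_zero_right (g : MvPolynomial (Fin k) (ZMod p)) :
    contract p k g 0 = 0 := by
  ext I; simp [contract_apply]

lemma contract_sum_left {α : Type*} (s : Finset α) (g : α → MvPolynomial (Fin k) (ZMod p))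
    (x : (Fin k → ℕ) →₀ ZMod p) :
    contract p k (∑ a ∈ s, g a) x = ∑ a ∈ s, contract p k (g a) x := by
  induction s using Finset.cons_induction with
  | empty => simp [contract_zero_left]
  | cons a s ha ih =>
    rw [Finset.sum_cons, Finset.sum_cons, contract_add_left, ih]

lemma linForm_add (μ ν : Fin k → ZMod p) :
    linForm p k (μ + ν) = linForm p k μ + linForm p k ν := by
  rw [linForm, linForm, linForm, ← Finset.sum_add_distrib]
  exact Finset.sum_congr rfl fun i _ => by rw [Pi.add_apply, add_smul]

lemma linForm_smul (b : ZMod p) (μ : Fin k → ZMod p) :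
    linForm p k (b • μ) = MvPolynomial.C b * linForm p k μ := by
  rw [linForm, linForm, Finset.mul_sum]
  exact Finset.sum_congr rfl fun i _ => by
    rw [Pi.smul_apply, smul_eq_mul, MvPolynomial.smul_eq_C_mul, MvPolynomial.smul_eq_C_mul,
      MvPolynomial.C_mul, mul_assoc]

lemma coeff_linForm (μ : Fin k → ZMod p) (i : Fin k) :
    MvPolynomial.coeff (Finsupp.single i 1) (linForm p k μ) = μ i := by
  rw [linForm]
  rw [MvPolynomial.coeff_sum]
  rw [Finset.sum_eq_single i]
  · rw [MvPolynomial.coeff_smul, MvPolynomial.coeff_X, smul_eq_mul, if_pos rfl, mul_one]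
  · intro j _ hj
    rw [MvPolynomial.coeff_smul, MvPolynomial.coeff_X', if_neg, smul_eq_mul, mul_zero]
    exact fun h => hj (Finsupp.single_left_injective one_ne_zero h)
  · simp

lemma linForm_injective : Function.Injective (linForm p k) := by
  intro μ ν h
  funext i
  rw [← coeff_linForm μ i, ← coeff_linForm ν i, h]

lemma mem_support_linForm [Fact p.Prime] {μ : Fin k → ZMod p} {J : Fin k →₀ ℕ}
    (hJ : J ∈ (linForm p k μ).support) : ∃ i, μ i ≠ 0 ∧ J = Finsupp.single i 1 := by
  classical
  have := MvPolynomial.support_sum (s := (Finset.univ : Finset (Fin k)))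
    (f := fun i => μ i • MvPolynomial.X i) hJ
  obtain ⟨i, -, hi⟩ := Finset.mem_biUnion.mp this
  have hi' : J ∈ (μ i • MvPolynomial.X i : MvPolynomial (Fin k) (ZMod p)).support := hi
  refine ⟨i, ?_, ?_⟩
  · intro h0
    rw [h0, zero_smul, MvPolynomial.support_zero] at hi'
    exact absurd hi' (Finset.notMem_empty J)
  · have := MvPolynomial.support_smul hi'
    rw [MvPolynomial.support_X] at this
    exact Finset.mem_singleton.mp this

lemma mem_support_mul {g h : MvPolynomial (Fin k) (ZMod p)} {J : Fin k →₀ ℕ}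
    (hJ : J ∈ (g * h).support) :
    ∃ a ∈ g.support, ∃ b ∈ h.support, a + b = J := by
  classical
  have := MvPolynomial.support_mul g h hJ
  obtain ⟨a, ha, b, hb, hab⟩ := Finset.mem_add.mp this
  exact ⟨a, ha, b, hb, hab⟩

lemma mem_support_pow_linForm [Fact p.Prime] {μ : Fin k → ZMod p} {i₀ : Fin k} (h0 : μ i₀ = 0)
    {n : ℕ} {J : Fin k →₀ ℕ} (hJ : J ∈ ((linForm p k μ) ^ n).support) :
    J i₀ = 0 ∧ ∑ i, J i = n := by
  induction n generalizing J with
  | zero =>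
    rw [pow_zero] at hJ
    have : J = 0 := by
      have := MvPolynomial.support_monomial_subset (s := (0 : Fin k →₀ ℕ)) (a := (1 : ZMod p))
      rw [MvPolynomial.monomial_zero'] at this
      simpa using Finset.mem_singleton.mp (this (by simpa using hJ))
    simp [this]
  | succ n ih =>
    rw [pow_succ] at hJ
    obtain ⟨a, ha, b, hb, hab⟩ := mem_support_mul hJ
    obtain ⟨ha0, hasum⟩ := ih ha
    obtain ⟨i, hμi, rfl⟩ := mem_support_linForm hb
    have hbi : (Finsupp.single i (1:ℕ)) i₀ = 0 := by
      rw [Finsupp.single_apply, if_neg]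
      intro h; rw [h, h0] at hμi; exact hμi rfl
    constructor
    · rw [← hab]; simp [Finsupp.add_apply, ha0, hbi]
    · rw [← hab]
      simp only [Finsupp.add_apply]
      rw [Finset.sum_add_distrib, hasum]
      have : ∑ i', (Finsupp.single i (1:ℕ)) i' = 1 := by
        simp [Finsupp.single_apply]
      rw [this]

lemma contract_sum_right {α : Type*} (g : MvPolynomial (Fin k) (ZMod p)) (s : Finset α)
    (x : α → ((Fin k → ℕ) →₀ ZMod p)) :
    contract p k g (∑ a ∈ s, x a) = ∑ a ∈ s, contract p k g (x a) := by
  induction s using Finset.cons_induction with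
  | empty => simp [contract_zero_right]
  | cons a s ha ih => rw [Finset.sum_cons, Finset.sum_cons, contract_add_right, ih]

lemma contract_X_single [Fact p.Prime] (i₀ : Fin k) (M : Fin k → ℕ) :
    contract p k (MvPolynomial.X i₀) (Finsupp.single (M + ⇑(Finsupp.single i₀ (1:ℕ))) (1 : ZMod p))
      = Finsupp.single M 1 := by
  ext I
  have hX : (MvPolynomial.X i₀ : MvPolynomial (Fin k) (ZMod p))
      = MvPolynomial.monomial (Finsupp.single i₀ 1) 1 := by
    rw [MvPolynomial.X]
  rw [hX, contract_monomial, one_mul, Finsupp.single_apply, Finsupp.single_apply]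
  congr 1
  simp only [eq_iff_iff]
  constructor
  · intro h
    have := add_right_cancel h
    rw [this]
  · intro h; rw [h]

lemma exists_contract_linForm_single_norm [Fact p.Prime] (μ : Fin k → ZMod p) (i₀ : Fin k)
    (hone : μ i₀ = 1) (I₀ : Fin k → ℕ) :
    ∃ x, contract p k (linForm p k μ) x = Finsupp.single I₀ (1 : ZMod p) := by
  classical
  set μ' : Fin k → ZMod p := Function.update μ i₀ 0 with hμ'
  have hμ'i₀ : μ' i₀ = 0 := Function.update_self i₀ 0 μ
  have hdecomp : linForm p k μ = MvPolynomial.X i₀ + linForm p k μ' := by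
    have hsum : μ = Pi.single i₀ (1 : ZMod p) + μ' := by
      funext i
      by_cases h : i = i₀
      · subst h; simp [hμ', hone]
      · simp [hμ', h, Function.update_of_ne h]
    have hX : linForm p k (Pi.single i₀ (1 : ZMod p)) = MvPolynomial.X i₀ := by
      rw [linForm, Finset.sum_eq_single i₀]
      · simp
      · intro j _ hj; rw [Pi.single_eq_of_ne hj, zero_smul]
      · simp
    rw [hsum, linForm_add, hX]
  set N := ∑ i, I₀ i with hN
  set M : ℕ → (Fin k → ℕ) := fun n => fun i => I₀ i + (if i = i₀ then n else 0) with hM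
  have hMsucc : ∀ n, M (n + 1) = M n + ⇑(Finsupp.single i₀ (1:ℕ)) := by
    intro n
    funext i
    by_cases h : i = i₀
    · subst h; simp [hM, Finsupp.single_apply]; omega
    · simp [hM, h, Finsupp.single_apply, (Ne.symm h : ¬ i₀ = i)]
  have hM0 : M 0 = I₀ := by funext i; simp [hM]
  set A : ℕ → ((Fin k → ℕ) →₀ ZMod p) := fun n =>
    contract p k ((linForm p k μ') ^ n) (Finsupp.single (M n) 1) with hA
  have hvanish : A (N + 1) = 0 := by
    ext I
    rw [hA, contract_apply, Finsupp.zero_apply]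
    apply Finset.sum_eq_zero
    intro J hJ
    obtain ⟨hJi₀, hJsum⟩ := mem_support_pow_linForm hμ'i₀ hJ
    have hne : M (N + 1) ≠ I + ⇑J := by
      intro heq
      have hle : ∀ i, i ≠ i₀ → J i ≤ I₀ i := by
        intro i hi
        have := congrFun heq i
        simp only [hM, Pi.add_apply, if_neg hi, add_zero] at this
        omega
      have : ∑ i, J i ≤ N := by
        rw [hN, Fintype.sum_eq_add_sum_compl i₀ (fun i => J i),
          Fintype.sum_eq_add_sum_compl i₀ I₀, hJi₀, zero_add]
        have h1 : ∑ i ∈ {i₀}ᶜ, J i ≤ ∑ i ∈ {i₀}ᶜ, I₀ i := by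
          apply Finset.sum_le_sum
          intro i hi
          exact hle i (by simpa using hi)
        omega
      omega
    rw [Finsupp.single_eq_of_ne' hne, mul_zero]
  have hA0 : A 0 = Finsupp.single I₀ 1 := by
    show contract p k ((linForm p k μ') ^ 0) (Finsupp.single (M 0) 1) = _
    rw [pow_zero, contract_one, hM0]
  refine ⟨∑ n ∈ Finset.range (N + 1),
    ((-1 : ZMod p) ^ n) • contract p k ((linForm p k μ') ^ n)
      (Finsupp.single (M (n + 1)) 1), ?_⟩
  rw [contract_sum_right]
  have hterm : ∀ n, contract p k (linForm p k μ)
      (((-1 : ZMod p) ^ n) • contract p k ((linForm p k μ') ^ n)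
        (Finsupp.single (M (n + 1)) 1))
      = ((-1 : ZMod p) ^ n) • A n - ((-1 : ZMod p) ^ (n+1)) • A (n + 1) := by
    intro n
    rw [contract_smul_right, hdecomp, contract_add_left]
    have h1 : contract p k (MvPolynomial.X i₀)
        (contract p k ((linForm p k μ') ^ n) (Finsupp.single (M (n + 1)) 1)) = A n := by
      rw [← contract_mul, mul_comm, contract_mul, hMsucc n, contract_X_single]
    have h2 : contract p k (linForm p k μ')
        (contract p k ((linForm p k μ') ^ n) (Finsupp.single (M (n + 1)) 1)) = A (n + 1) := by
      rw [← contract_mul, ← pow_succ']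
    rw [h1, h2, smul_add, pow_succ, mul_comm ((-1:ZMod p)^n), neg_one_mul, neg_smul, sub_neg_eq_add]
  rw [Finset.sum_congr rfl (fun n _ => hterm n), Finset.sum_range_sub']
  rw [pow_zero, one_smul, hA0, hvanish, smul_zero, sub_zero]

lemma exists_contract_linForm_single [Fact p.Prime] (μ : Fin k → ZMod p) (hμ : μ ≠ 0)
    (I₀ : Fin k → ℕ) :
    ∃ x, contract p k (linForm p k μ) x = Finsupp.single I₀ (1 : ZMod p) := by
  obtain ⟨i₀, hi₀⟩ := Function.ne_iff.mp hμ
  have ha : μ i₀ ≠ 0 := by simpa using hi₀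
  set a := μ i₀ with haa
  obtain ⟨x, hx⟩ := exists_contract_linForm_single_norm (a⁻¹ • μ) i₀
    (by simp [haa]; exact inv_mul_cancel₀ ha) I₀
  refine ⟨a⁻¹ • x, ?_⟩
  have hμeq : linForm p k μ = MvPolynomial.C a * linForm p k (a⁻¹ • μ) := by
    rw [← linForm_smul, smul_smul, mul_inv_cancel₀ ha, one_smul]
  rw [hμeq, contract_mul, contract_smul_right, hx, contract_C, smul_smul,
    mul_inv_cancel₀ ha, one_smul]

lemma contract_linForm_surjective [Fact p.Prime] (μ : Fin k → ZMod p) (hμ : μ ≠ 0) :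
    Function.Surjective (contract p k (linForm p k μ)) := by
  intro y
  induction y using Finsupp.induction with
  | zero => exact ⟨0, contract_zero_right _⟩
  | single_add I₀ b f hI hb ih =>
    obtain ⟨x, hx⟩ := ih
    obtain ⟨x1, hx1⟩ := exists_contract_linForm_single μ hμ I₀
    refine ⟨b • x1 + x, ?_⟩
    rw [contract_add_right, contract_smul_right, hx, hx1, Finsupp.smul_single, smul_eq_mul,
      mul_one]

lemma linForm_sub (μ ν : Fin k → ZMod p) :
    linForm p k (μ - ν) = linForm p k μ - linForm p k ν := by
  have := linForm_add (p := p) (k := k) (μ - ν) ν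
  rw [sub_add_cancel] at this
  rw [this]; ring

lemma contract_mul_surjective {g h : MvPolynomial (Fin k) (ZMod p)}
    (hg : Function.Surjective (contract p k g)) (hh : Function.Surjective (contract p k h)) :
    Function.Surjective (contract p k (g * h)) := by
  have : contract p k (g * h) = (contract p k g) ∘ (contract p k h) := by
    funext x; exact contract_mul g h x
  rw [this]
  exact hg.comp hh

lemma contract_one_surjective [Fact p.Prime] :
    Function.Surjective (contract p k (1 : MvPolynomial (Fin k) (ZMod p))) :=
  fun y => ⟨y, contract_one y⟩

noncomputable def truncEquiv (p c k : ℕ) (hck : c ≤ k) :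
    {v : Fin k → ZMod p // v ≠ 0 ∧ ∀ i : Fin k, c ≤ (i : ℕ) → v i = 0} ≃
      {w : Fin c → ZMod p // w ≠ 0} where
  toFun v := ⟨fun i => v.1 (Fin.castLE hck i), by
    intro h0
    apply v.2.1
    funext i
    by_cases h : (i : ℕ) < c
    · have := congrFun h0 ⟨(i : ℕ), h⟩
      simpa using this.trans rfl
    · exact v.2.2 i (le_of_not_gt h)⟩
  invFun w := ⟨fun i => if h : (i : ℕ) < c then w.1 ⟨(i : ℕ), h⟩ else 0, by
    constructor
    · intro h0
      apply w.2
      funext i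
      have := congrFun h0 (Fin.castLE hck i)
      simp only [Pi.zero_apply] at this ⊢
      have hlt : ((Fin.castLE hck i : Fin k) : ℕ) < c := by simpa using i.is_lt
      rw [dif_pos hlt] at this
      rw [show i = (⟨((Fin.castLE hck i : Fin k) : ℕ), hlt⟩ : Fin c) from Fin.ext rfl]
      exact this
    · intro i hi
      exact dif_neg (not_lt.mpr hi)⟩
  left_inv v := by
    apply Subtype.ext
    funext i
    show (if h : (i : ℕ) < c then v.1 (Fin.castLE hck ⟨(i : ℕ), h⟩) else 0) = v.1 i
    by_cases h : (i : ℕ) < c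
    · rw [dif_pos h]; exact congrArg v.1 (Fin.ext rfl)
    · rw [dif_neg h, v.2.2 i (le_of_not_gt h)]
  right_inv w := by
    apply Subtype.ext
    funext i
    have hlt : ((Fin.castLE hck i : Fin k) : ℕ) < c := by simpa using i.is_lt
    show (if h : ((Fin.castLE hck i : Fin k) : ℕ) < c
        then w.1 ⟨((Fin.castLE hck i : Fin k) : ℕ), h⟩ else 0) = w.1 i
    rw [dif_pos hlt]
    exact congrArg w.1 (Fin.ext rfl)

lemma card_S [Fact p.Prime] (c : ℕ) (hck : c ≤ k) :
    Fintype.card {v : Fin k → ZMod p // v ≠ 0 ∧ ∀ i : Fin k, c ≤ (i : ℕ) → v i = 0}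
      = p ^ c - 1 := by
  rw [Fintype.card_congr (truncEquiv p c k hck)]
  have h1 : Fintype.card {w : Fin c → ZMod p // ¬ (w = 0)}
      = Fintype.card (Fin c → ZMod p) - Fintype.card {w : Fin c → ZMod p // w = 0} :=
    Fintype.card_subtype_compl _
  have h2 : Fintype.card {w : Fin c → ZMod p // w = 0} = 1 := Fintype.card_subtype_eq 0
  have h3 : Fintype.card (Fin c → ZMod p) = p ^ c := by
    rw [Fintype.card_fun, ZMod.card, Fintype.card_fin]
  calc Fintype.card {w : Fin c → ZMod p // w ≠ 0}
      = Fintype.card {w : Fin c → ZMod p // ¬ (w = 0)} := rfl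
    _ = p ^ c - 1 := by rw [h1, h2, h3]

lemma per_factor [Fact p.Prime] (c : ℕ) (hck : c ≤ k) (m0 : Fin (p ^ c - 1)) :
    ∃ (u : {v : Fin k → ZMod p // v ≠ 0 ∧ ∀ i : Fin k, c ≤ (i : ℕ) → v i = 0} →
        MvPolynomial (Fin k) (ZMod p)) (h : MvPolynomial (Fin k) (ZMod p)),
      Function.Surjective (contract p k h) ∧
      ∀ m : Fin (p ^ c - 1),
        (∑ v : {v : Fin k → ZMod p // v ≠ 0 ∧ ∀ i : Fin k, c ≤ (i : ℕ) → v i = 0},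
          u v * (linForm p k v.1) ^ ((m : ℕ) + 1)) = if m = m0 then h else 0 := by
  classical
  have hcard : Fintype.card {v : Fin k → ZMod p // v ≠ 0 ∧ ∀ i : Fin k, c ≤ (i : ℕ) → v i = 0}
      = p ^ c - 1 := card_S c hck
  let e : Fin (p ^ c - 1) ≃ {v : Fin k → ZMod p // v ≠ 0 ∧ ∀ i : Fin k, c ≤ (i : ℕ) → v i = 0} :=
    (Fintype.equivFinOfCardEq hcard).symm
  let z : Fin (p ^ c - 1) → MvPolynomial (Fin k) (ZMod p) := fun t => linForm p k (e t).1
  let M : Matrix (Fin (p ^ c - 1)) (Fin (p ^ c - 1)) (MvPolynomial (Fin k) (ZMod p)) :=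
    Matrix.of fun m t => z t ^ ((m : ℕ) + 1)
  let u' : Fin (p ^ c - 1) → MvPolynomial (Fin k) (ZMod p) := Matrix.cramer M (Pi.single m0 1)
  have hkey : M.mulVec u'
      = M.det • (Pi.single m0 1 : Fin (p ^ c - 1) → MvPolynomial (Fin k) (ZMod p)) :=
    Matrix.mulVec_cramer M _
  have hdet : Function.Surjective (contract p k M.det) := by
    have hMt : M.transpose = Matrix.diagonal z * Matrix.vandermonde z := by
      apply Matrix.ext
      intro t m
      rw [Matrix.transpose_apply, Matrix.diagonal_mul]
      show z t ^ ((m : ℕ) + 1) = z t * Matrix.vandermonde z t m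
      rw [Matrix.vandermonde_apply, pow_succ']
    have hdeteq : M.det = (∏ t, z t) * ∏ i, ∏ j ∈ Finset.Ioi i, (z j - z i) := by
      rw [← Matrix.det_transpose M, hMt, Matrix.det_mul, Matrix.det_diagonal,
        Matrix.det_vandermonde]
    rw [hdeteq]
    apply contract_mul_surjective
    · apply Finset.prod_induction _ (fun g => Function.Surjective (contract p k g))
        (fun _ _ => contract_mul_surjective) contract_one_surjective
      intro t _
      exact contract_linForm_surjective _ (e t).2.1
    · apply Finset.prod_induction _ (fun g => Function.Surjective (contract p k g))
        (fun _ _ => contract_mul_surjective) contract_one_surjective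
      intro i _
      apply Finset.prod_induction _ (fun g => Function.Surjective (contract p k g))
        (fun _ _ => contract_mul_surjective) contract_one_surjective
      intro j hj
      have hij : i ≠ j := fun h => by
        rw [h] at hj; exact absurd (Finset.mem_Ioi.mp hj) (lt_irrefl j)
      have hsub : z j - z i = linForm p k ((e j).1 - (e i).1) := (linForm_sub _ _).symm
      rw [hsub]
      apply contract_linForm_surjective
      intro h0
      rw [sub_eq_zero] at h0
      exact hij (e.injective (Subtype.ext h0)).symm
  refine ⟨fun v => u' (e.symm v), M.det, hdet, ?_⟩
  intro m
  have hm := congrFun hkey m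
  have hlhs : (M.mulVec u') m = ∑ t, z t ^ ((m : ℕ) + 1) * u' t := by
    simp [Matrix.mulVec, dotProduct, M]
  have hsum : ∑ v : {v : Fin k → ZMod p // v ≠ 0 ∧ ∀ i : Fin k, c ≤ (i : ℕ) → v i = 0},
      u' (e.symm v) * (linForm p k v.1) ^ ((m : ℕ) + 1)
      = ∑ t, z t ^ ((m : ℕ) + 1) * u' t := by
    rw [← Equiv.sum_comp e
      (fun v => u' (e.symm v) * (linForm p k v.1) ^ ((m : ℕ) + 1))]
    exact Finset.sum_congr rfl fun t _ => by
      rw [e.symm_apply_apply, mul_comm]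
  rw [hsum, ← hlhs, hm]
  by_cases hmm : m = m0
  · rw [if_pos hmm, Pi.smul_apply, hmm, Pi.single_eq_same, smul_eq_mul, mul_one]
  · rw [if_neg hmm, Pi.smul_apply, Pi.single_eq_of_ne hmm, smul_eq_mul, mul_zero]

/-- The homological statement inside Proposition `homcomplarge`: for monotone
`δ : Fin ℓ → ℕ` with `1 ≤ δ j ≤ k`, and `Λ` the set of families `(λ_j)` of nonzero
vectors with `λ_j` supported in the first `δ j` coordinates, the map
`⊕_{Λ} H_*^k → H_*^k ⊗ M_{δ_1} ⊗ ⋯ ⊗ M_{δ_ℓ}`,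
`(x_Λ) ↦ ∑_Λ Θ_Λ(x_Λ)` (with `Θ_Λ` in multi-component `ν` the contraction by
`∏_j ℓ_{λ_j}^{(ν j)+1}`), is surjective. -/
theorem homcomplarge_surjective (p k ℓ : ℕ) [Fact p.Prime] (hk : 1 ≤ k) (hℓ : 1 ≤ ℓ)
    (δ : Fin ℓ → ℕ) (hδmono : Monotone δ) (hδ : ∀ j, 1 ≤ δ j ∧ δ j ≤ k)
    (y : ((Fin k → ℕ) × (∀ j : Fin ℓ, Fin (p ^ δ j - 1))) →₀ ZMod p) :
    ∃ x : {lam : Fin ℓ → Fin k → ZMod p //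
        ∀ j, lam j ≠ 0 ∧ ∀ i : Fin k, δ j ≤ (i : ℕ) → lam j i = 0} →
        ((Fin k → ℕ) →₀ ZMod p),
      ∀ (I : Fin k → ℕ) (ν : ∀ j : Fin ℓ, Fin (p ^ δ j - 1)),
        y (I, ν) = ∑ lam : {lam : Fin ℓ → Fin k → ZMod p //
            ∀ j, lam j ≠ 0 ∧ ∀ i : Fin k, δ j ≤ (i : ℕ) → lam j i = 0},
          contract p k (∏ j : Fin ℓ, linForm p k (lam.1 j) ^ ((ν j : ℕ) + 1)) (x lam) I := by
  have key : ∀ (I₀ : Fin k → ℕ) (ν₀ : ∀ j : Fin ℓ, Fin (p ^ δ j - 1)),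
      ∃ x : {lam : Fin ℓ → Fin k → ZMod p //
          ∀ j, lam j ≠ 0 ∧ ∀ i : Fin k, δ j ≤ (i : ℕ) → lam j i = 0} →
          ((Fin k → ℕ) →₀ ZMod p),
        ∀ (I : Fin k → ℕ) (ν : ∀ j : Fin ℓ, Fin (p ^ δ j - 1)),
          (Finsupp.single (I₀, ν₀) (1 : ZMod p)) (I, ν)
            = ∑ lam : {lam : Fin ℓ → Fin k → ZMod p //
                ∀ j, lam j ≠ 0 ∧ ∀ i : Fin k, δ j ≤ (i : ℕ) → lam j i = 0},
              contract p k (∏ j : Fin ℓ, linForm p k (lam.1 j) ^ ((ν j : ℕ) + 1)) (x lam) I := by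
    intro I₀ ν₀
    choose u h hsurj hval using fun j : Fin ℓ => per_factor (p := p) (k := k) (δ j) (hδ j).2 (ν₀ j)
    have hHsurj : Function.Surjective (contract p k (∏ j, h j)) := by
      apply Finset.prod_induction _ (fun g => Function.Surjective (contract p k g))
        (fun _ _ => contract_mul_surjective) contract_one_surjective
      intro j _
      exact hsurj j
    obtain ⟨x₀, hx₀⟩ := hHsurj (Finsupp.single I₀ 1)
    let E := Equiv.subtypePiEquivPi
      (p := fun (j : Fin ℓ) (v : Fin k → ZMod p) => v ≠ 0 ∧ ∀ i : Fin k, δ j ≤ (i : ℕ) → v i = 0)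
    refine ⟨fun lam => contract p k (∏ j, u j (E lam j)) x₀, ?_⟩
    intro I ν
    have hpoly : ∑ lam : {lam : Fin ℓ → Fin k → ZMod p //
          ∀ j, lam j ≠ 0 ∧ ∀ i : Fin k, δ j ≤ (i : ℕ) → lam j i = 0},
        (∏ j, linForm p k (lam.1 j) ^ ((ν j : ℕ) + 1)) * ∏ j, u j (E lam j)
        = if ν = ν₀ then ∏ j, h j else 0 := by
      have step1 : ∀ lam : {lam : Fin ℓ → Fin k → ZMod p //
            ∀ j, lam j ≠ 0 ∧ ∀ i : Fin k, δ j ≤ (i : ℕ) → lam j i = 0},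
          (∏ j, linForm p k (lam.1 j) ^ ((ν j : ℕ) + 1)) * ∏ j, u j (E lam j)
            = ∏ j, (u j (E lam j) * linForm p k ((E lam j)).1 ^ ((ν j : ℕ) + 1)) := by
        intro lam
        rw [← Finset.prod_mul_distrib]
        exact Finset.prod_congr rfl fun j _ => mul_comm _ _
      rw [Finset.sum_congr rfl (fun lam _ => step1 lam)]
      rw [Fintype.sum_equiv E
        (fun lam => ∏ j, (u j (E lam j) * linForm p k ((E lam j)).1 ^ ((ν j : ℕ) + 1)))
        (fun F => ∏ j, (u j (F j) * linForm p k ((F j)).1 ^ ((ν j : ℕ) + 1)))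
        (fun lam => rfl)]
      rw [← Fintype.prod_sum (fun j (v : {v : Fin k → ZMod p //
          v ≠ 0 ∧ ∀ i : Fin k, δ j ≤ (i : ℕ) → v i = 0}) =>
        u j v * linForm p k v.1 ^ ((ν j : ℕ) + 1))]
      rw [Finset.prod_congr rfl (fun j _ => hval j (ν j))]
      by_cases hν : ν = ν₀
      · rw [if_pos hν]
        exact Finset.prod_congr rfl fun j _ => if_pos (congrFun hν j)
      · rw [if_neg hν]
        obtain ⟨j₀, hj₀⟩ := Function.ne_iff.mp hν
        exact Finset.prod_eq_zero (Finset.mem_univ j₀) (if_neg hj₀)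
    -- now compute the sum of contractions
    have hrhs : ∑ lam : {lam : Fin ℓ → Fin k → ZMod p //
          ∀ j, lam j ≠ 0 ∧ ∀ i : Fin k, δ j ≤ (i : ℕ) → lam j i = 0},
        contract p k (∏ j, linForm p k (lam.1 j) ^ ((ν j : ℕ) + 1))
          (contract p k (∏ j, u j (E lam j)) x₀) I
        = contract p k (if ν = ν₀ then ∏ j, h j else 0) x₀ I := by
      have e1 : ∀ lam : {lam : Fin ℓ → Fin k → ZMod p //
            ∀ j, lam j ≠ 0 ∧ ∀ i : Fin k, δ j ≤ (i : ℕ) → lam j i = 0},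
          contract p k (∏ j, linForm p k (lam.1 j) ^ ((ν j : ℕ) + 1))
            (contract p k (∏ j, u j (E lam j)) x₀)
          = contract p k ((∏ j, linForm p k (lam.1 j) ^ ((ν j : ℕ) + 1)) *
              (∏ j, u j (E lam j))) x₀ := fun lam => (contract_mul _ _ _).symm
      calc ∑ lam : {lam : Fin ℓ → Fin k → ZMod p //
            ∀ j, lam j ≠ 0 ∧ ∀ i : Fin k, δ j ≤ (i : ℕ) → lam j i = 0},
          contract p k (∏ j, linForm p k (lam.1 j) ^ ((ν j : ℕ) + 1))
            (contract p k (∏ j, u j (E lam j)) x₀) I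
          = ∑ lam : {lam : Fin ℓ → Fin k → ZMod p //
              ∀ j, lam j ≠ 0 ∧ ∀ i : Fin k, δ j ≤ (i : ℕ) → lam j i = 0},
            contract p k ((∏ j, linForm p k (lam.1 j) ^ ((ν j : ℕ) + 1)) *
              (∏ j, u j (E lam j))) x₀ I :=
            Finset.sum_congr rfl fun lam _ => by rw [e1 lam]
        _ = (∑ lam : {lam : Fin ℓ → Fin k → ZMod p //
              ∀ j, lam j ≠ 0 ∧ ∀ i : Fin k, δ j ≤ (i : ℕ) → lam j i = 0},
            contract p k ((∏ j, linForm p k (lam.1 j) ^ ((ν j : ℕ) + 1)) *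
              (∏ j, u j (E lam j))) x₀) I := by
            rw [Finsupp.finset_sum_apply]
        _ = contract p k (∑ lam : {lam : Fin ℓ → Fin k → ZMod p //
              ∀ j, lam j ≠ 0 ∧ ∀ i : Fin k, δ j ≤ (i : ℕ) → lam j i = 0},
            ((∏ j, linForm p k (lam.1 j) ^ ((ν j : ℕ) + 1)) *
              (∏ j, u j (E lam j)))) x₀ I := by
            rw [contract_sum_left]
        _ = contract p k (if ν = ν₀ then ∏ j, h j else 0) x₀ I := by rw [hpoly]
    rw [hrhs]
    by_cases hν : ν = ν₀
    · rw [if_pos hν, hx₀, Finsupp.single_apply, Finsupp.single_apply]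
      by_cases hI : I₀ = I
      · rw [if_pos hI, if_pos (by rw [hI, hν])]
      · rw [if_neg hI, if_neg (fun hc => hI (congrArg Prod.fst hc))]
    · rw [if_neg hν, contract_zero_left, Finsupp.zero_apply, Finsupp.single_apply,
        if_neg (fun hc => hν (congrArg Prod.snd hc).symm)]
  induction y using Finsupp.induction with
  | zero =>
    refine ⟨fun _ => 0, fun I ν => ?_⟩
    rw [Finsupp.zero_apply]
    rw [Finset.sum_congr rfl (fun lam _ => by rw [contract_zero_right, Finsupp.zero_apply])]
    rw [Finset.sum_const_zero]
  | single_add a b f haf hb ih =>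
    obtain ⟨xf, hxf⟩ := ih
    obtain ⟨I₀, ν₀⟩ := a
    obtain ⟨x1, hx1⟩ := key I₀ ν₀
    refine ⟨fun lam => b • x1 lam + xf lam, fun I ν => ?_⟩
    have hL : (Finsupp.single (I₀, ν₀) b + f) (I, ν)
        = b * (Finsupp.single (I₀, ν₀) (1 : ZMod p)) (I, ν) + f (I, ν) := by
      rw [Finsupp.add_apply, Finsupp.single_apply, Finsupp.single_apply, mul_ite, mul_one,
        mul_zero]
    rw [hL, hx1 I ν, hxf I ν, Finset.mul_sum, ← Finset.sum_add_distrib]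
    exact Finset.sum_congr rfl fun lam _ => by
      rw [contract_add_right, contract_smul_right, Finsupp.add_apply, Finsupp.smul_apply,
        smul_eq_mul]
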